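/- arXiv:1405.2164 — 2 statements merged into one kernel-verified Lean document; each statement's English description precedes it below -/
import Mathlib

section
/- Let n ≥ 0 and let F : B^{n+1} → ℝ^{n+2} be the parametrization of the upper hyperboloid F(x) = ((1 + ‖x‖²)/(1 − ‖x‖²), 2x/(1 − ‖x‖²)). Then F is differentiable on the open unit ball, and for every x with ‖x‖ < 1 and all v, w ∈ ℝ^{n+1}, the pullback of the Lorentzian bilinear form satisfies b(DF(x)v, DF(x)w) = 4⟨v, w⟩/(1 − ‖x‖²)², where DF(x) is the Fréchet derivative of F at x. (Thus the Lorentzian metric induces on the hyperboloid, identified with B^{n+1}, exactly the Poincaré metric g₊ = 4(dx₁² + ⋯ + dx_{n+1}²)/(1 − ‖x‖²)².) -/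
open scoped RealInnerProductSpace

/-- The Lorentzian symmetric bilinear form `b(ζ, ξ) = -ζ₀ξ₀ + ⟨ζ', ξ'⟩` on `ℝ × ℝ^{n+1}`. -/
noncomputable def Lorb (n : ℕ) (ζ ξ : ℝ × EuclideanSpace ℝ (Fin (n + 1))) : ℝ :=
  -(ζ.1 * ξ.1) + ⟪ζ.2, ξ.2⟫

/-- The parametrization `F` of the upper hyperboloid by the unit ball. -/
noncomputable def hypF (n : ℕ) (x : EuclideanSpace ℝ (Fin (n + 1))) :
    ℝ × EuclideanSpace ℝ (Fin (n + 1)) :=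
  ((1 + ‖x‖ ^ 2) / (1 - ‖x‖ ^ 2), ((2 : ℝ) / (1 - ‖x‖ ^ 2)) • x)

/-- The pullback by `F` of the Lorentzian metric to the unit ball is the Poincaré metric
`g₊ = 4⟨·,·⟩/(1 - ‖x‖²)²`. -/
theorem hyperboloid_induces_poincare_metric (n : ℕ)
    (x : EuclideanSpace ℝ (Fin (n + 1))) (hx : ‖x‖ < 1) :
    DifferentiableAt ℝ (hypF n) x ∧
    ∀ v w : EuclideanSpace ℝ (Fin (n + 1)),
      Lorb n (fderiv ℝ (hypF n) x v) (fderiv ℝ (hypF n) x w) =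
        4 * ⟪v, w⟫ / (1 - ‖x‖ ^ 2) ^ 2 := by
  set d : ℝ := 1 - ‖x‖ ^ 2 with hd_def
  have hs : ‖x‖ ^ 2 < 1 := by nlinarith [norm_nonneg x]
  have hd : d ≠ 0 := by simp only [hd_def]; nlinarith
  have hnorm : HasFDerivAt (fun y : EuclideanSpace ℝ (Fin (n + 1)) => ‖y‖ ^ 2) (2 • innerSL ℝ x) x :=
    (hasStrictFDerivAt_norm_sq x).hasFDerivAt
  have hg1 : HasDerivAt (fun t : ℝ => (1 + t) / (1 - t)) (2 / d ^ 2) (‖x‖ ^ 2) := by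
    have h := ((hasDerivAt_const (‖x‖ ^ 2) (1:ℝ)).add (hasDerivAt_id _)).div
      ((hasDerivAt_const (‖x‖ ^ 2) (1:ℝ)).sub (hasDerivAt_id _)) hd
    refine h.congr_deriv ?_
    simp only [Pi.add_apply, Pi.sub_apply, id, hd_def]
    field_simp
    ring
  have hg2 : HasDerivAt (fun t : ℝ => 2 / (1 - t)) (2 / d ^ 2) (‖x‖ ^ 2) := by
    have h := (hasDerivAt_const (‖x‖ ^ 2) (2:ℝ)).div
      ((hasDerivAt_const (‖x‖ ^ 2) (1:ℝ)).sub (hasDerivAt_id _)) hd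
    refine h.congr_deriv ?_
    simp only [Pi.add_apply, Pi.sub_apply, id, hd_def]
    field_simp
    ring
  have h1 : HasFDerivAt (fun y : EuclideanSpace ℝ (Fin (n + 1)) => (1 + ‖y‖ ^ 2) / (1 - ‖y‖ ^ 2))
      ((2 / d ^ 2) • (2 • innerSL ℝ x)) x := HasDerivAt.comp_hasFDerivAt (h₂ := fun t : ℝ => (1 + t) / (1 - t)) x hg1 hnorm
  have hc : HasFDerivAt (fun y : EuclideanSpace ℝ (Fin (n + 1)) => (2:ℝ) / (1 - ‖y‖ ^ 2))
      ((2 / d ^ 2) • (2 • innerSL ℝ x)) x := HasDerivAt.comp_hasFDerivAt (h₂ := fun t : ℝ => 2 / (1 - t)) x hg2 hnorm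
  have h2 : HasFDerivAt (fun y : EuclideanSpace ℝ (Fin (n + 1)) => ((2:ℝ) / (1 - ‖y‖ ^ 2)) • y)
      ((2 / d) • ContinuousLinearMap.id ℝ (EuclideanSpace ℝ (Fin (n + 1))) +
        ((2 / d ^ 2) • (2 • innerSL ℝ x)).smulRight x) x := by
    exact hc.smul (hasFDerivAt_id x)
  have hF : HasFDerivAt (hypF n)
      (((2 / d ^ 2) • (2 • innerSL ℝ x)).prod
        ((2 / d) • ContinuousLinearMap.id ℝ (EuclideanSpace ℝ (Fin (n + 1))) +
          ((2 / d ^ 2) • (2 • innerSL ℝ x)).smulRight x)) x := h1.prodMk h2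
  refine ⟨hF.differentiableAt, fun v w => ?_⟩
  rw [hF.fderiv]
  simp only [Lorb, ContinuousLinearMap.prod_apply, ContinuousLinearMap.add_apply,
    ContinuousLinearMap.smul_apply, ContinuousLinearMap.smulRight_apply,
    ContinuousLinearMap.id_apply, innerSL_apply_apply, smul_eq_mul,
    inner_add_add_self, inner_smul_left, inner_smul_right, real_inner_smul_left,
    real_inner_smul_right, inner_add_left, inner_add_right, two_smul]
  have hxx : ⟪x, x⟫ = ‖x‖ ^ 2 := real_inner_self_eq_norm_sq x
  simp only [starRingEnd_apply, star_trivial]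
  rw [hxx]
  rw [show (⟪v, x⟫ : ℝ) = ⟪x, v⟫ from real_inner_comm x v] 
  generalize (⟪x, v⟫ : ℝ) = a
  generalize (⟪x, w⟫ : ℝ) = b
  generalize (⟪v, w⟫ : ℝ) = c
  field_simp
  ring
end

section
/- Let n ≥ 1, let g : ℝ^{n+2} → ℝ^{n+2} be a linear map with B(gζ) = B(ζ) for all ζ, and let φ_g : S^n → S^n be the induced map φ_g(x) = (g(1, x))'/(g(1, x))₀. Then φ_g is differentiable as a map of the sphere, and for every x ∈ S^n and all tangent vectors v, w ∈ ℝ^{n+1} with ⟨v, x⟩ = ⟨w, x⟩ = 0, the tangential derivative Dφ_g(x) (the Fréchet derivative of φ_g within S^n at x) satisfies ⟨Dφ_g(x)v, Dφ_g(x)w⟩ = ((g(1, x))₀)^{−2}·⟨v, w⟩. (Thus G = O(n+1,1) acts on S^n by conformal maps of the round metric, with conformal factor ((g(1,x))₀)^{−1}.) -/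
open scoped RealInnerProductSpace
open Filter ContinuousLinearMap


lemma mem_tangentCone_sphere {E : Type*} [NormedAddCommGroup E] [InnerProductSpace ℝ E]
    {x v : E} (hx : ‖x‖ = 1) (hv : ⟪v, x⟫ = 0) :
    v ∈ tangentConeAt ℝ {y : E | ‖y‖ = 1} x := by
  set h : ℝ → E := fun t => (Real.sqrt (1 + t ^ 2 * ‖v‖ ^ 2))⁻¹ • (x + t • v) with hh
  have hq : ∀ t : ℝ, ‖x + t • v‖ ^ 2 = 1 + t ^ 2 * ‖v‖ ^ 2 := by
    intro t
    have hv' : ⟪x, v⟫ = 0 := by rw [real_inner_comm]; exact hv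
    rw [norm_add_sq_real, real_inner_smul_right, hv']
    simp [norm_smul, mul_pow, hx, abs_sq, sq_abs]
  have hqpos : ∀ t : ℝ, (0:ℝ) < 1 + t ^ 2 * ‖v‖ ^ 2 := by
    intro t; positivity
  have hsq : ∀ t : ℝ, Real.sqrt (1 + t ^ 2 * ‖v‖ ^ 2) = ‖x + t • v‖ := by
    intro t; rw [← hq t, Real.sqrt_sq (norm_nonneg _)]
  have hmem : ∀ t : ℝ, ‖h t‖ = 1 := by
    intro t
    have hpos : (0:ℝ) < ‖x + t • v‖ := by
      rw [← hsq t]; exact Real.sqrt_pos.2 (hqpos t)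
    rw [hh]; simp only [norm_smul, hsq t, norm_inv, Real.norm_eq_abs, abs_of_pos hpos]
    field_simp
  have h0 : h 0 = x := by simp [hh]
  -- derivative of h at 0 is v
  have hd : HasDerivAt h v 0 := by
    have hq' : HasDerivAt (fun t : ℝ => 1 + t ^ 2 * ‖v‖ ^ 2) 0 0 := by
      have := ((hasDerivAt_pow 2 (0:ℝ)).mul_const (‖v‖ ^ 2)).const_add 1
      simpa using this
    have hs : HasDerivAt (fun t : ℝ => Real.sqrt (1 + t ^ 2 * ‖v‖ ^ 2)) 0 0 := by
      have := (Real.hasDerivAt_sqrt (by norm_num : (1:ℝ) + 0 ^ 2 * ‖v‖ ^ 2 ≠ 0)).comp 0 hq'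
      simpa [Function.comp_def] using this
    have hinv : HasDerivAt (fun t : ℝ => (Real.sqrt (1 + t ^ 2 * ‖v‖ ^ 2))⁻¹) 0 0 := by
      have := hs.inv (by norm_num [Real.sqrt_one] : Real.sqrt (1 + (0:ℝ) ^ 2 * ‖v‖ ^ 2) ≠ 0)
      simpa [Pi.inv_def] using this
    have hlin : HasDerivAt (fun t : ℝ => x + t • v) v 0 := by
      have := ((hasDerivAt_id (0:ℝ)).smul_const v).const_add x
      simpa using this
    have h2 := hinv.smul hlin
    rw [hh]
    convert h2 using 1
    · rfl
    · simp only [zero_pow two_ne_zero, zero_mul, add_zero, Real.sqrt_one, inv_one, one_smul, zero_smul]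
  -- build the sequence
  rw [mem_tangentConeAt_iff_exists_seq_norm_tendsto_atTop]
  refine ⟨fun n => (n : ℝ) + 1, fun n => h (((n : ℝ) + 1)⁻¹) - x, ?_, ?_, ?_⟩
  swap
  · filter_upwards with n
    simp only [add_sub_cancel]
    exact hmem _
  · have h1 : Tendsto (fun n : ℕ => (n : ℝ) + 1) atTop atTop :=
      tendsto_atTop_add_const_right _ 1 tendsto_natCast_atTop_atTop
    refine h1.congr (fun n => ?_)
    rw [Real.norm_eq_abs, abs_of_pos (by positivity)]
  · have hslope : Tendsto (slope h 0) (nhdsWithin 0 {(0:ℝ)}ᶜ) (nhds v) :=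
      hasDerivAt_iff_tendsto_slope.1 hd
    have ht : Tendsto (fun n : ℕ => ((n : ℝ) + 1)⁻¹) atTop (nhdsWithin 0 {(0:ℝ)}ᶜ) := by
      apply tendsto_nhdsWithin_of_tendsto_nhds_of_eventually_within
      · exact tendsto_inv_atTop_zero.comp (tendsto_atTop_add_const_right _ 1 tendsto_natCast_atTop_atTop)
      · filter_upwards with n
        simp only [Set.mem_compl_iff, Set.mem_singleton_iff]
        positivity
    have := hslope.comp ht
    refine this.congr (fun n => ?_)
    simp only [Function.comp_apply, slope_def_module, h0, sub_zero, inv_inv, smul_smul]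

/-- The standard Lorentzian quadratic form `B(ζ) = -ζ₀² + ‖ζ'‖²` on `ℝ^{n+2} = ℝ × ℝ^{n+1}`. -/
noncomputable def LorB (n : ℕ) (ζ : ℝ × EuclideanSpace ℝ (Fin (n + 1))) : ℝ :=
  -ζ.1 ^ 2 + ‖ζ.2‖ ^ 2

/-- The induced map of the sphere `φ_g(x) = (g(1,x))'/(g(1,x))₀` is a conformal map of the
round metric, with conformal factor `((g(1,x))₀)⁻¹`. -/
theorem lorentz_transform_conformal_on_sphere (n : ℕ) (hn : 1 ≤ n)
    (g : (ℝ × EuclideanSpace ℝ (Fin (n + 1))) →ₗ[ℝ] (ℝ × EuclideanSpace ℝ (Fin (n + 1))))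
    (hg : ∀ ζ, LorB n (g ζ) = LorB n ζ)
    (φ : EuclideanSpace ℝ (Fin (n + 1)) → EuclideanSpace ℝ (Fin (n + 1)))
    (hφ : ∀ x, φ x = ((g ((1 : ℝ), x)).1)⁻¹ • (g ((1 : ℝ), x)).2) :
    ∀ x : EuclideanSpace ℝ (Fin (n + 1)), ‖x‖ = 1 →
      DifferentiableWithinAt ℝ φ {y | ‖y‖ = 1} x ∧
      ∀ v w : EuclideanSpace ℝ (Fin (n + 1)), ⟪v, x⟫ = 0 → ⟪w, x⟫ = 0 →
        ⟪fderivWithin ℝ φ {y | ‖y‖ = 1} x v, fderivWithin ℝ φ {y | ‖y‖ = 1} x w⟫ =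
          (((g ((1 : ℝ), x)).1) ^ 2)⁻¹ * ⟪v, w⟫ := by
  -- polarization: g preserves the Lorentzian bilinear form
  have hQ : ∀ ζ η : ℝ × (EuclideanSpace ℝ (Fin (n + 1))),
      -((g ζ).1 * (g η).1) + ⟪(g ζ).2, (g η).2⟫ = -(ζ.1 * η.1) + ⟪ζ.2, η.2⟫ := by
    intro ζ η
    have h1 := hg (ζ + η)
    have h2 := hg ζ
    have h3 := hg η
    simp only [LorB, map_add, Prod.fst_add, Prod.snd_add, norm_add_sq_real] at h1
    simp only [LorB] at h2 h3
    linear_combination (h1 - h2 - h3) / 2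
  intro x hx
  have hxx : ⟪x, x⟫ = (1:ℝ) := by
    rw [real_inner_self_eq_norm_sq, hx]; norm_num
  set α : ℝ := (g ((1:ℝ), x)).1 with hα_def
  set β : (EuclideanSpace ℝ (Fin (n + 1))) := (g ((1:ℝ), x)).2 with hβ_def
  have hββ : ⟪β, β⟫ = α * α := by
    have := hQ ((1:ℝ), x) ((1:ℝ), x)
    simp only [hxx] at this
    linarith
  have hα : α ≠ 0 := by
    intro h0
    have hβ0 : β = 0 := by
      have : ⟪β, β⟫ = 0 := by rw [hββ, h0, mul_zero]
      exact inner_self_eq_zero.1 this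
    have := hQ ((1:ℝ), x) ((-1:ℝ), x)
    rw [← hα_def, ← hβ_def, h0, hβ0] at this
    simp [hxx] at this
    norm_num [hx] at this
  -- derivative machinery
  have : FiniteDimensional ℝ (ℝ × (EuclideanSpace ℝ (Fin (n + 1)))) := by infer_instance
  set G : (ℝ × (EuclideanSpace ℝ (Fin (n + 1)))) →L[ℝ] (ℝ × (EuclideanSpace ℝ (Fin (n + 1)))) := LinearMap.toContinuousLinearMap g with hG
  set A : (EuclideanSpace ℝ (Fin (n + 1))) →L[ℝ] ℝ := (ContinuousLinearMap.fst ℝ ℝ (EuclideanSpace ℝ (Fin (n + 1)))) ∘L (G ∘L (ContinuousLinearMap.inr ℝ ℝ (EuclideanSpace ℝ (Fin (n + 1))))) with hA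
  set Bm : (EuclideanSpace ℝ (Fin (n + 1))) →L[ℝ] (EuclideanSpace ℝ (Fin (n + 1))) := (ContinuousLinearMap.snd ℝ ℝ (EuclideanSpace ℝ (Fin (n + 1)))) ∘L (G ∘L (ContinuousLinearMap.inr ℝ ℝ (EuclideanSpace ℝ (Fin (n + 1))))) with hBm
  have hAv : ∀ v : (EuclideanSpace ℝ (Fin (n + 1))), A v = (g ((0:ℝ), v)).1 := by intro v; simp [hA, hG]
  have hBv : ∀ v : (EuclideanSpace ℝ (Fin (n + 1))), Bm v = (g ((0:ℝ), v)).2 := by intro v; simp [hBm, hG]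
  have hsplit : ∀ y : (EuclideanSpace ℝ (Fin (n + 1))), g ((1:ℝ), y) = g ((1:ℝ), x) + g ((0:ℝ), y - x) := by
    intro y
    rw [← map_add]
    congr 1
    simp
  have ha : HasFDerivAt (fun y : (EuclideanSpace ℝ (Fin (n + 1))) => (g ((1:ℝ), y)).1) A x := by
    have h1 : HasFDerivAt (fun y : (EuclideanSpace ℝ (Fin (n + 1))) => α + A (y - x)) A x := by
      have := (A.hasFDerivAt (x := x)).sub_const (A x)
      have h2 := this.const_add α
      refine h2.congr_of_eventuallyEq ?_
      filter_upwards with y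
      simp [map_sub]
    refine h1.congr_of_eventuallyEq ?_
    filter_upwards with y
    rw [hsplit y]
    simp [hAv, hα_def]
  have hb : HasFDerivAt (fun y : (EuclideanSpace ℝ (Fin (n + 1))) => (g ((1:ℝ), y)).2) Bm x := by
    have h1 : HasFDerivAt (fun y : (EuclideanSpace ℝ (Fin (n + 1))) => β + Bm (y - x)) Bm x := by
      have := (Bm.hasFDerivAt (x := x)).sub_const (Bm x)
      have h2 := this.const_add β
      refine h2.congr_of_eventuallyEq ?_
      filter_upwards with y
      simp [map_sub]
    refine h1.congr_of_eventuallyEq ?_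
    filter_upwards with y
    rw [hsplit y]
    simp [hBv, hβ_def]
  have hinv : HasFDerivAt (fun y : (EuclideanSpace ℝ (Fin (n + 1))) => ((g ((1:ℝ), y)).1)⁻¹) (-(α ^ 2)⁻¹ • A) x := by
    have h1 : HasDerivAt (fun y : ℝ => y⁻¹) (-(α ^ 2)⁻¹) α := by
      simpa using hasDerivAt_inv hα
    exact h1.comp_hasFDerivAt x ha
  set D : (EuclideanSpace ℝ (Fin (n + 1))) →L[ℝ] (EuclideanSpace ℝ (Fin (n + 1))) := α⁻¹ • Bm + (-(α ^ 2)⁻¹ • A).smulRight β with hD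
  have hφderiv : HasFDerivAt φ D x := by
    have h1 := hinv.smul hb
    refine (h1.congr_of_eventuallyEq ?_)
    filter_upwards with y
    rw [hφ y]; rfl
  have hdiff : DifferentiableWithinAt ℝ φ {y : (EuclideanSpace ℝ (Fin (n + 1))) | ‖y‖ = 1} x :=
    hφderiv.differentiableAt.differentiableWithinAt
  refine ⟨hdiff, ?_⟩
  intro v w hv hw
  have hW : HasFDerivWithinAt φ (fderivWithin ℝ φ {y : (EuclideanSpace ℝ (Fin (n + 1))) | ‖y‖ = 1} x) {y : (EuclideanSpace ℝ (Fin (n + 1))) | ‖y‖ = 1} x :=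
    hdiff.hasFDerivWithinAt
  have hDw : HasFDerivWithinAt φ D {y : (EuclideanSpace ℝ (Fin (n + 1))) | ‖y‖ = 1} x :=
    hφderiv.hasFDerivWithinAt
  have hfv : fderivWithin ℝ φ {y : (EuclideanSpace ℝ (Fin (n + 1))) | ‖y‖ = 1} x v = D v :=
    hW.unique_on hDw (mem_tangentCone_sphere hx hv)
  have hfw : fderivWithin ℝ φ {y : (EuclideanSpace ℝ (Fin (n + 1))) | ‖y‖ = 1} x w = D w :=
    hW.unique_on hDw (mem_tangentCone_sphere hx hw)
  rw [hfv, hfw]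
  -- the algebra
  set pv : ℝ := (g ((0:ℝ), v)).1
  set pw : ℝ := (g ((0:ℝ), w)).1
  set bv : (EuclideanSpace ℝ (Fin (n + 1))) := (g ((0:ℝ), v)).2
  set bw : (EuclideanSpace ℝ (Fin (n + 1))) := (g ((0:ℝ), w)).2
  have hbb : ⟪bv, bw⟫ = ⟪v, w⟫ + pv * pw := by
    have := hQ ((0:ℝ), v) ((0:ℝ), w); simp only at this; linarith [this]
  have hbβ : ⟪bv, β⟫ = pv * α := by
    have := hQ ((0:ℝ), v) ((1:ℝ), x)
    simp only [hv] at this; linarith [this]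
  have hβb : ⟪β, bw⟫ = α * pw := by
    have := hQ ((1:ℝ), x) ((0:ℝ), w)
    simp only at this
    rw [real_inner_comm w x, hw] at this
    linarith [this]
  have hDv : D v = α⁻¹ • bv + (-(α ^ 2)⁻¹ * pv) • β := by
    simp [hD, hAv, hBv, smul_smul]; rfl
  have hDw' : D w = α⁻¹ • bw + (-(α ^ 2)⁻¹ * pw) • β := by
    simp [hD, hAv, hBv, smul_smul]; rfl
  rw [hDv, hDw']
  simp only [inner_add_left, inner_add_right, real_inner_smul_left, real_inner_smul_right,
    hbb, hbβ, hβb, hββ]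
  field_simp
  ring
end
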